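/- There exists l ∈ (1,2) such that for the function F_1 above (with δ > 0 small enough), 1 < l ≤ F_1'(s) s / F_1(s) ≤ 2 for all s > 0. -/

import Mathlib

noncomputable def F1 (δ s : ℝ) : ℝ :=
  if s = 0 then 0
  else if |s| < δ then -(1/2) * s^2 * Real.log (s^2)
  else -(1/2) * s^2 * (Real.log (δ^2) + 3) + 2 * δ * |s| - δ^2 / 2

open Real Set Filter Topology

lemma F1_eq_left {δ s : ℝ} (h0 : 0 < s) (h1 : s < δ) :
    F1 δ s = -(1/2) * s^2 * Real.log (s^2) := by
  rw [F1, if_neg h0.ne', if_pos (by rw [abs_of_pos h0]; exact h1)]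

lemma F1_eq_right {δ s : ℝ} (hδ : 0 < δ) (h : δ ≤ s) :
    F1 δ s = -(1/2) * s^2 * (Real.log (δ^2) + 3) + 2*δ*s - δ^2/2 := by
  have hs : 0 < s := lt_of_lt_of_le hδ h
  rw [F1, if_neg hs.ne', if_neg (by rw [abs_of_pos hs]; exact not_lt.2 h), abs_of_pos hs]

lemma hasDerivAt_leftfun {s : ℝ} (hs : s ≠ 0) :
    HasDerivAt (fun x => -(1/2) * x^2 * Real.log (x^2)) (-s * Real.log (s^2) - s) s := by
  have h1 : HasDerivAt (fun x : ℝ => x^2) (2*s) s := by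
    simpa using hasDerivAt_pow 2 s
  have h2 : HasDerivAt (fun x : ℝ => Real.log (x^2)) (2*s / s^2) s :=
    h1.log (pow_ne_zero 2 hs)
  have h3 := (h1.const_mul (-(1/2) : ℝ)).mul h2
  refine h3.congr_deriv ?_
  field_simp
  ring

lemma hasDerivAt_rightfun (δ C s : ℝ) :
    HasDerivAt (fun x => -(1/2) * x^2 * C + 2*δ*x - δ^2/2) (-C * s + 2*δ) s := by
  have h1 : HasDerivAt (fun x : ℝ => x^2) (2*s) s := by simpa using hasDerivAt_pow 2 s
  have h2 := (((h1.const_mul (-(1/2):ℝ)).mul_const C).add ((hasDerivAt_id s).const_mul (2*δ))).sub_const (δ^2/2)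
  refine h2.congr_deriv ?_
  ring

lemma deriv_F1_left {δ s : ℝ} (h0 : 0 < s) (h1 : s < δ) :
    deriv (F1 δ) s = -s * Real.log (s^2) - s := by
  have hev : F1 δ =ᶠ[𝓝 s] (fun x => -(1/2) * x^2 * Real.log (x^2)) := by
    filter_upwards [Ioo_mem_nhds h0 h1] with x hx
    exact F1_eq_left hx.1 hx.2
  rw [hev.deriv_eq]
  exact (hasDerivAt_leftfun h0.ne').deriv

lemma hasDerivAt_F1_right {δ s : ℝ} (hδ : 0 < δ) (h : δ ≤ s) :
    HasDerivAt (F1 δ) (-(Real.log (δ^2) + 3) * s + 2*δ) s := by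
  set C : ℝ := Real.log (δ^2) + 3 with hCdef
  have hg : HasDerivAt (fun x => -(1/2) * x^2 * C + 2*δ*x - δ^2/2) (-C * s + 2*δ) s :=
    hasDerivAt_rightfun δ C s
  rcases eq_or_lt_of_le h with rfl | h
  · -- junction point s = δ
    have hval : F1 δ δ = -(1/2) * δ^2 * Real.log (δ^2) := by
      rw [F1_eq_right hδ le_rfl]; ring
    have hR : HasDerivWithinAt (F1 δ) (-C * δ + 2*δ) (Ici δ) δ := by
      refine (hg.hasDerivWithinAt).congr (fun y hy => F1_eq_right hδ hy) ?_
      exact F1_eq_right hδ le_rfl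
    have hL : HasDerivWithinAt (F1 δ) (-C * δ + 2*δ) (Iic δ) δ := by
      have hf : HasDerivAt (fun x => -(1/2) * x^2 * Real.log (x^2))
          (-δ * Real.log (δ^2) - δ) δ := hasDerivAt_leftfun hδ.ne'
      have heq : -δ * Real.log (δ^2) - δ = -C * δ + 2*δ := by rw [hCdef]; ring
      rw [← heq]
      refine (hf.hasDerivWithinAt).congr_of_eventuallyEq ?_ hval
      filter_upwards [self_mem_nhdsWithin,
        mem_nhdsWithin_of_mem_nhds (Ioi_mem_nhds hδ)] with x hx1 hx2
      rcases lt_or_eq_of_le (mem_Iic.1 hx1) with hlt | rfl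
      · exact F1_eq_left hx2 hlt
      · exact hval
    have := hL.union hR
    rw [Iic_union_Ici] at this
    exact this.hasDerivAt (by simp)
  · have hev : F1 δ =ᶠ[𝓝 s] (fun x => -(1/2) * x^2 * C + 2*δ*x - δ^2/2) := by
      filter_upwards [Ioi_mem_nhds h] with x hx
      exact F1_eq_right hδ (le_of_lt hx)
    exact hg.congr_of_eventuallyEq hev

theorem stmt7 :
    ∃ δ₀ > (0:ℝ), ∀ δ : ℝ, 0 < δ → δ < δ₀ →
      ∃ l : ℝ, l ∈ Set.Ioo (1:ℝ) 2 ∧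
        ∀ s : ℝ, 0 < s →
          l ≤ deriv (F1 δ) s * s / F1 δ s ∧ deriv (F1 δ) s * s / F1 δ s ≤ 2 := by
  refine ⟨Real.exp (-3), Real.exp_pos _, fun δ hδ hδlt => ⟨3/2, by norm_num, fun s hs => ?_⟩⟩
  have hlogδ : Real.log δ < -3 := by
    have := Real.log_lt_log hδ hδlt
    rwa [Real.log_exp] at this
  rcases lt_or_ge s δ with hsδ | hsδ
  · -- 0 < s < δ
    rw [deriv_F1_left hs hsδ, F1_eq_left hs hsδ]
    set L : ℝ := Real.log (s^2) with hL
    have hL6 : L < -6 := by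
      have h1 : Real.log s < -3 := lt_trans (Real.log_lt_log hs hsδ) hlogδ
      rw [hL, Real.log_pow]
      push_cast
      linarith
    have hD : 0 < -(1/2) * s^2 * L := by
      have := mul_pos hs hs
      nlinarith
    constructor
    · rw [le_div_iff₀ hD]
      nlinarith [mul_pos hs hs]
    · rw [div_le_iff₀ hD]
      nlinarith [mul_pos hs hs]
  · -- δ ≤ s
    rw [(hasDerivAt_F1_right hδ hsδ).deriv, F1_eq_right hδ hsδ]
    set C : ℝ := Real.log (δ^2) + 3 with hC
    have hC3 : C < -3 := by
      rw [hC, Real.log_pow]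
      push_cast
      linarith
    have hD : 0 < -(1/2) * s^2 * C + 2*δ*s - δ^2/2 := by
      nlinarith [mul_pos hs hs, mul_pos hδ hs, mul_pos hδ hδ]
    constructor
    · rw [le_div_iff₀ hD]
      nlinarith [sq_nonneg (3*s - 2*δ), mul_pos hs hs]
    · rw [div_le_iff₀ hD]
      nlinarith [mul_pos hδ hδ, mul_pos hδ hs]
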